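/- arXiv:2303.10889 — 3 statements merged into one kernel-verified Lean document; each statement's English description precedes it below -/
import Mathlib

section
/- Let D be a rich domain all of whose preferences are top-separable. Fix s ∈ M and elements a^s, b^s, c^s ∈ A^s with a^s ≠ c^s and b^s ≠ c^s. If b^s is included in every path in the graph G_≈^{A^s} connecting a^s and c^s, then every induced marginal preference Q ∈ [D]^s with top a^s ranks b^s above c^s. -/
noncomputable section

universe u

/-- A (strict) preference: a complete, antisymmetric, transitive binary relation,
i.e. a strict linear order, on `α`.  `rel a b` reads "`a` is strictly preferred to `b`". -/
structure Pref (α : Type u) : Type u where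
  rel : α → α → Prop
  asymm : ∀ a b, rel a b → ¬ rel b a
  trans : ∀ a b c, rel a b → rel b c → rel a c
  total : ∀ a b, a ≠ b → rel a b ∨ rel b a

namespace Pref

variable {α : Type u}

theorem exists_top [Finite α] [Nonempty α] (P : Pref α) :
    ∃ a : α, ∀ b, b ≠ a → P.rel a b := by
  haveI : IsTrans α P.rel := ⟨P.trans⟩
  haveI : IsIrrefl α P.rel := ⟨fun a h => P.asymm a a h h⟩
  obtain ⟨a, -, ha⟩ :=
    (Finite.wellFounded_of_trans_of_irrefl P.rel).has_min Set.univ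
      ⟨Classical.arbitrary α, trivial⟩
  refine ⟨a, fun b hb => ?_⟩
  rcases P.total a b (fun h => hb h.symm) with h | h
  · exact h
  · exact absurd h (ha b trivial)

/-- The top-ranked alternative `r₁(P)` of a preference. -/
def top [Finite α] [Nonempty α] (P : Pref α) : α := P.exists_top.choose

theorem top_spec [Finite α] [Nonempty α] (P : Pref α) :
    ∀ b, b ≠ P.top → P.rel P.top b := P.exists_top.choose_spec

/-- `rank P a = k` means that `a` is the `k`-th ranked alternative `r_k(P)`. -/
def rank (P : Pref α) (a : α) : ℕ := {b | P.rel b a}.ncard + 1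

/-- The induced marginal preference `[P]^s` on component `s`:
derived from `P` by referring to the off-`s` components of the top alternative. -/
def marg {m : ℕ} {A : Fin m → Type u} [∀ s, Fintype (A s)] [∀ s, Nonempty (A s)]
    (P : Pref (∀ s, A s)) (s : Fin m) : Pref (A s) where
  rel x y := P.rel (Function.update P.top s x) (Function.update P.top s y)
  asymm _ _ h := P.asymm _ _ h
  trans _ _ _ h₁ h₂ := P.trans _ _ _ h₁ h₂
  total x y hxy := P.total _ _ fun h => hxy (by
    have := congrFun h s
    simpa using this)

end Pref

section SocialChoice

variable {m : ℕ} {A : Fin m → Type u}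

/-- `a` and `b` are similar, differing exactly in component `s`: `M(a,b) = {s}`. -/
def SimilarAt (a b : ∀ s, A s) (s : Fin m) : Prop :=
  a s ≠ b s ∧ ∀ t, t ≠ s → a t = b t

/-- The "slice" `(A^s, x^{-s})` of alternatives agreeing with `x` off component `s`. -/
def Slice (s : Fin m) (x : ∀ t, A t) : Set (∀ t, A t) :=
  {a | ∀ t, t ≠ s → a t = x t}

variable [∀ s, Fintype (A s)] [∀ s, Nonempty (A s)]

/-- The induced marginal domain `[D]^s`. -/
def margDomain (D : Set (Pref (∀ s, A s))) (s : Fin m) : Set (Pref (A s)) :=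
  (fun P => Pref.marg P s) '' D

/-- A preference is minimal-richness witnessed: every alternative is some preference's top. -/
def MinimallyRich (D : Set (Pref (∀ s, A s))) : Prop :=
  ∀ a : ∀ s, A s, ∃ P ∈ D, Pref.top P = a

/-- A separable preference. -/
def Separable (P : Pref (∀ s, A s)) : Prop :=
  ∃ Q : ∀ s, Pref (A s), ∀ (s : Fin m) (a b : ∀ t, A t),
    SimilarAt a b s → (Q s).rel (a s) (b s) → P.rel a b

/-- A top-separable preference. -/
def TopSeparable (P : Pref (∀ s, A s)) : Prop :=
  ∀ (s : Fin m) (a b : ∀ t, A t), SimilarAt a b s → a s = Pref.top P s → P.rel a b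

end SocialChoice

/-- Two preferences are complete reversals. -/
def CompleteReversals {α : Type u} (P P' : Pref α) : Prop :=
  ∀ a b, P.rel a b ↔ P'.rel b a

section SCFProps

variable {β : Type u}

/-- Unanimity of a (marginal) social choice function on domain `E`. -/
def Unanimous [Finite β] [Nonempty β] (E : Set (Pref β)) {n : ℕ}
    (f : (Fin n → E) → β) : Prop :=
  ∀ (p : Fin n → E) (a : β), (∀ i, Pref.top (p i).1 = a) → f p = a

/-- Strategy-proofness of a (marginal) social choice function on domain `E`. -/
def StrategyProof (E : Set (Pref β)) {n : ℕ} (f : (Fin n → E) → β) : Prop :=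
  ∀ (p : Fin n → E) (i : Fin n) (Q : E),
    f p ≠ f (Function.update p i Q) →
    (p i).1.rel (f p) (f (Function.update p i Q))

/-- The tops-only property. -/
def TopsOnly [Finite β] [Nonempty β] (E : Set (Pref β)) {n : ℕ}
    (f : (Fin n → E) → β) : Prop :=
  ∀ p p' : Fin n → E, (∀ i, Pref.top (p i).1 = Pref.top (p' i).1) → f p = f p'

end SCFProps

section Decomp

variable {m : ℕ} {A : Fin m → Type u} [∀ s, Fintype (A s)] [∀ s, Nonempty (A s)]

/-- The profile of induced marginal preferences `([P₁]^s, …, [Pₙ]^s)`. -/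
def margProfile (D : Set (Pref (∀ s, A s))) (s : Fin m) {n : ℕ}
    (p : Fin n → D) : Fin n → (margDomain D s) :=
  fun i => ⟨Pref.marg (p i).1 s, ⟨(p i).1, (p i).2, rfl⟩⟩

/-- `f` is decomposed by the family of marginal SCFs `g`. -/
def Decomposable (D : Set (Pref (∀ s, A s))) {n : ℕ}
    (f : (Fin n → D) → (∀ s, A s))
    (g : ∀ s : Fin m, (Fin n → (margDomain D s)) → A s) : Prop :=
  ∀ p : Fin n → D, ∀ s, f p s = g s (margProfile D s p)

/-- A decomposable domain: for every `n ≥ 2` and every SCF, being a strategy-proof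
unanimous rule is equivalent to being decomposable into strategy-proof unanimous
marginal rules. -/
def DecomposableDomain (D : Set (Pref (∀ s, A s))) : Prop :=
  ∀ n : ℕ, 2 ≤ n → ∀ f : (Fin n → D) → (∀ s, A s),
    (Unanimous D f ∧ StrategyProof D f) ↔
      ∃ g : ∀ s : Fin m, (Fin n → (margDomain D s)) → A s,
        Decomposable D f g ∧
        ∀ s, Unanimous (margDomain D s) (g s) ∧ StrategyProof (margDomain D s) (g s)

/-- Diversity⁺: `D` contains two separable preferences that are complete reversals. -/
def DiversityPlus (D : Set (Pref (∀ s, A s))) : Prop :=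
  ∃ P ∈ D, ∃ P' ∈ D, Separable P ∧ Separable P' ∧ CompleteReversals P P'

end Decomp

/-- Adjacency of two preferences: they coincide except that two alternatives ranked
consecutively in `P` occupy the same two positions in reversed order in `P'`. -/
def Adjacent {β : Type u} (P P' : Pref β) : Prop :=
  ∃ a b : β, a ≠ b ∧
    P.rank b = P.rank a + 1 ∧ P'.rank b = P.rank a ∧ P'.rank a = P.rank a + 1 ∧
    ∀ c, c ≠ a → c ≠ b → P.rank c = P'.rank c

section AdjPlus

variable {m : ℕ} {A : Fin m → Type u} [∀ s, Fintype (A s)] [∀ s, Nonempty (A s)]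

/-- Adjacency⁺ of two (separable) preferences. -/
def AdjacentPlus (P P' : Pref (∀ s, A s)) : Prop :=
  Separable P ∧ Separable P' ∧
  ∃ (s : Fin m) (a b : A s), a ≠ b ∧
    (∀ z : ∀ t, A t,
      P.rank (Function.update z s b) = P.rank (Function.update z s a) + 1 ∧
      P'.rank (Function.update z s b) = P.rank (Function.update z s a) ∧
      P'.rank (Function.update z s a) = P.rank (Function.update z s a) + 1) ∧
    ∀ c : ∀ t, A t, c s ≠ a → c s ≠ b → P.rank c = P'.rank c

/-- Edges of the graph `G_{~/~⁺}`: adjacency or adjacency⁺. -/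
def AdjEdge (P P' : Pref (∀ s, A s)) : Prop :=
  Adjacent P P' ∨ AdjacentPlus P P'

end AdjPlus

/-- A path in a graph with edge relation `edge` and vertex set `S`, connecting `x` to `y`. -/
def IsPath {β : Type u} (edge : β → β → Prop) (S : Set β) (x y : β)
    (l : List β) : Prop :=
  2 ≤ l.length ∧ l.Nodup ∧ l.head? = some x ∧ l.getLast? = some y ∧
    (∀ z ∈ l, z ∈ S) ∧ List.Chain' edge l

/-- A path of preferences has `{a,b}`-restoration if the relative ranking of `a` and `b`
flips more than once along the path. -/
def HasRestoration {β : Type u} (l : List (Pref β)) (a b : β) : Prop :=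
  ∃ o p q : Fin l.length, o < p ∧ p < q ∧
    (((l.get o).rel a b ∧ (l.get p).rel b a ∧ (l.get q).rel a b) ∨
     ((l.get o).rel b a ∧ (l.get p).rel a b ∧ (l.get q).rel b a))

section RichDom

variable {m : ℕ} {A : Fin m → Type u} [∀ s, Fintype (A s)] [∀ s, Nonempty (A s)]

/-- The Interior⁺ property. -/
def InteriorPlus (D : Set (Pref (∀ s, A s))) : Prop :=
  ∀ P ∈ D, ∀ P' ∈ D, P ≠ P' → Pref.top P = Pref.top P' →
    ∃ l : List (Pref (∀ s, A s)),
      IsPath AdjEdge D P P' l ∧ ∀ Q ∈ l, Pref.top Q = Pref.top P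

/-- The Exterior⁺ property (including the no-detour condition). -/
def ExteriorPlus (D : Set (Pref (∀ s, A s))) : Prop :=
  ∀ P ∈ D, ∀ P' ∈ D, Pref.top P ≠ Pref.top P' →
    (∀ a b : ∀ s, A s, ∃ l : List (Pref (∀ s, A s)),
        IsPath AdjEdge D P P' l ∧ ¬ HasRestoration l a b) ∧
    ∀ s : Fin m, SimilarAt (Pref.top P) (Pref.top P') s →
      ∃ l : List (Pref (∀ s, A s)),
        IsPath AdjEdge D P P' l ∧ ∀ Q ∈ l, ∀ t, t ≠ s → Pref.top Q t = Pref.top P t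

/-- A rich domain: minimally rich, diversity⁺, Interior⁺ and Exterior⁺. -/
def RichDomain (D : Set (Pref (∀ s, A s))) : Prop :=
  MinimallyRich D ∧ DiversityPlus D ∧ InteriorPlus D ∧ ExteriorPlus D

end RichDom

/-- The weak interval `⟨x,y⟩` w.r.t. a linear order. -/
def wInterval {β : Type u} (lin : LinearOrder β) (x y : β) : Set β :=
  {z | (lin.le x z ∧ lin.le z y) ∨ (lin.le y z ∧ lin.le z x)}

/-- The strict (open) interval `Int⟨x,y⟩` w.r.t. a linear order. -/
def sInterval {β : Type u} (lin : LinearOrder β) (x y : β) : Set β :=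
  {z | (lin.lt x z ∧ lin.lt z y) ∨ (lin.lt y z ∧ lin.lt z x)}

/-- `x` and `y` are marginal thresholds w.r.t. `lin`. -/
def MarginalThresholds {β : Type u} (lin : LinearOrder β) (x y : β) : Prop :=
  x = y ∨ (x ≠ y ∧ 3 ≤ (wInterval lin x y).ncard)

/-- `x` and `y` are strongly connected in the marginal domain `E`: `x ≈ y`. -/
def StronglyConnected {β : Type u} (E : Set (Pref β)) (x y : β) : Prop :=
  ∃ Q ∈ E, ∃ Q' ∈ E,
    Pref.rank Q x = 1 ∧ Pref.rank Q y = 2 ∧ Pref.rank Q' y = 1 ∧ Pref.rank Q' x = 2 ∧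
    ∀ z, z ≠ x → z ≠ y → Pref.rank Q z = Pref.rank Q' z

/-- Edges of the graph `G_≈`. -/
def scEdge {β : Type u} (E : Set (Pref β)) (x y : β) : Prop :=
  x ≠ y ∧ StronglyConnected E x y

/-- The graph with edge relation `edge` on vertex set `B` is connected. -/
def GraphConnectedOn {β : Type u} (edge : β → β → Prop) (B : Set β) : Prop :=
  ∀ x ∈ B, ∀ y ∈ B, x ≠ y → ∃ l : List β, IsPath edge B x y l

/-- `v` is a leaf of the graph with edge relation `edge` on vertex set `B`:
it has a unique neighbor. -/
def IsLeaf {β : Type u} (edge : β → β → Prop) (B : Set β) (v : β) : Prop :=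
  v ∈ B ∧ ∃! w, w ∈ B ∧ edge v w

/-- A hybrid marginal preference on `lin` w.r.t. marginal thresholds `ylo`, `yhi`. -/
def HybridPref {β : Type u} [Finite β] [Nonempty β] (lin : LinearOrder β)
    (ylo yhi : β) (Q : Pref β) : Prop :=
  ∀ a b : β, a ≠ b → a ∈ sInterval lin (Pref.top Q) b →
    a ∉ sInterval lin ylo yhi → Q.rel a b

section MDH

variable {m : ℕ} {A : Fin m → Type u} [∀ s, Fintype (A s)] [∀ s, Nonempty (A s)]

/-- `xlo` and `xhi` are thresholds: marginal thresholds on every component. -/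
def Thresholds (prec : ∀ s, LinearOrder (A s)) (xlo xhi : ∀ s, A s) : Prop :=
  ∀ s, MarginalThresholds (prec s) (xlo s) (xhi s)

/-- A multidimensional hybrid preference on `≺ = ∏ prec s` w.r.t. thresholds `xlo`, `xhi`. -/
def MDHybrid (prec : ∀ s, LinearOrder (A s)) (xlo xhi : ∀ s, A s)
    (P : Pref (∀ s, A s)) : Prop :=
  ∀ (s : Fin m) (a b : ∀ t, A t), SimilarAt a b s →
    (a s = Pref.top P s → P.rel a b) ∧
    (a s ∈ sInterval (prec s) (Pref.top P s) (b s) →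
      a s ∉ sInterval (prec s) (xlo s) (xhi s) → P.rel a b)

/-- A multidimensional single-peaked preference on `≺ = ∏ prec s`. -/
def MSP (prec : ∀ s, LinearOrder (A s)) (P : Pref (∀ s, A s)) : Prop :=
  ∀ (s : Fin m) (a b : ∀ t, A t), SimilarAt a b s →
    a s ∈ wInterval (prec s) (Pref.top P s) (b s) → P.rel a b

/-- A multidimensional hybrid domain on `≺` w.r.t. thresholds `xlo`, `xhi`. -/
def MDHybridDomain (D : Set (Pref (∀ s, A s))) (prec : ∀ s, LinearOrder (A s))
    (xlo xhi : ∀ s, A s) : Prop :=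
  Thresholds prec xlo xhi ∧
  (∀ P ∈ D, MDHybrid prec xlo xhi P) ∧
  ∀ s, GraphConnectedOn (scEdge (margDomain D s)) Set.univ ∧
    (xlo s ≠ xhi s →
      ∀ v, ¬ IsLeaf (scEdge (margDomain D s)) (wInterval (prec s) (xlo s) (xhi s)) v)

/-- Strong connectedness⁺ of two alternatives: `a ≈⁺ b`. -/
def SCPlus (D : Set (Pref (∀ s, A s))) (a b : ∀ s, A s) : Prop :=
  ∃ P ∈ D, ∃ P' ∈ D, Pref.top P = a ∧ Pref.top P' = b ∧ AdjacentPlus P P'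

end MDH

/-- The outcome of the fixed-ballot formula
`max_{J ⊆ N} ( min_{i ∈ J} ( r₁(Qᵢ), b_J ) )`. -/
def fbrValue {β : Type u} (lin : LinearOrder β) {n : ℕ} [Fintype β]
    (bal : Finset (Fin n) → β) (tops : Fin n → β) : β :=
  letI := lin
  letI : DecidableEq β := lin.toDecidableEq
  Finset.univ.sup' ⟨∅, Finset.mem_univ _⟩
    fun J : Finset (Fin n) =>
      (insert (bal J) (J.image tops)).inf' (Finset.insert_nonempty _ _) id

/-- Fixed ballots: ballot unanimity and monotonicity. -/
def FBRBallots {β : Type u} [Fintype β] [Nonempty β] (lin : LinearOrder β) {n : ℕ}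
    (bal : Finset (Fin n) → β) : Prop :=
  bal ∅ = @Finset.min' β lin Finset.univ Finset.univ_nonempty ∧
  bal Finset.univ = @Finset.max' β lin Finset.univ Finset.univ_nonempty ∧
  ∀ J J' : Finset (Fin n), J ⊂ J' → lin.le (bal J) (bal J')

/-- A fixed ballot rule (FBR) on the linear order `lin`. -/
def IsFBR {β : Type u} [Fintype β] [Nonempty β] (lin : LinearOrder β)
    (E : Set (Pref β)) {n : ℕ} (f : (Fin n → E) → β) : Prop :=
  ∃ bal : Finset (Fin n) → β, FBRBallots lin bal ∧
    ∀ p : Fin n → E, f p = fbrValue lin bal fun i => Pref.top (p i).1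

/-- An `(xlo, xhi)`-FBR: an FBR that additionally satisfies the
constrained-dictatorship condition. -/
def IsConstrainedFBR {β : Type u} [Fintype β] [Nonempty β] (lin : LinearOrder β)
    (xlo xhi : β) (E : Set (Pref β)) {n : ℕ} (f : (Fin n → E) → β) : Prop :=
  ∃ bal : Finset (Fin n) → β, FBRBallots lin bal ∧
    (∀ p : Fin n → E, f p = fbrValue lin bal fun i => Pref.top (p i).1) ∧
    ∃ i : Fin n, ∀ J : Finset (Fin n),
      (i ∈ J → lin.le xhi (bal J)) ∧ (i ∉ J → lin.le (bal J) xlo)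

/-! ### Auxiliary lemmas for Statement 16 -/

namespace Pref

variable {β : Type u} [Finite β]

theorem not_rel_self (P : Pref β) (x : β) : ¬ P.rel x x := fun h => P.asymm _ _ h h

theorem rank_lt_of_rel (P : Pref β) {x y : β} (h : P.rel x y) : P.rank x < P.rank y := by
  have hsub : {w | P.rel w x} ⊂ {w | P.rel w y} := by
    constructor
    · intro w hw
      exact P.trans _ _ _ hw h
    · intro hsup
      exact P.not_rel_self x (hsup (show x ∈ {w | P.rel w y} from h))
  have := Set.ncard_lt_ncard hsub (Set.toFinite _)
  simpa [Pref.rank] using this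

theorem rel_iff_rank_lt (P : Pref β) {x y : β} (hxy : x ≠ y) :
    P.rel x y ↔ P.rank x < P.rank y := by
  constructor
  · exact P.rank_lt_of_rel
  · intro h
    rcases P.total x y hxy with h' | h'
    · exact h'
    · have := P.rank_lt_of_rel h'
      omega

theorem rank_inj (P : Pref β) {x y : β} (h : P.rank x = P.rank y) : x = y := by
  by_contra hxy
  rcases P.total x y hxy with h' | h' <;> have := P.rank_lt_of_rel h' <;> omega

theorem one_le_rank (P : Pref β) (x : β) : 1 ≤ P.rank x := by
  simp [Pref.rank]

variable [Nonempty β]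

theorem rank_top (P : Pref β) : P.rank P.top = 1 := by
  have hempty : {w | P.rel w P.top} = ∅ := by
    ext w
    simp only [Set.mem_setOf_eq, Set.mem_empty_iff_false, iff_false]
    intro hw
    have hne : w ≠ P.top := fun h => P.not_rel_self _ (h ▸ hw)
    exact P.asymm _ _ (P.top_spec w hne) hw
  simp [Pref.rank, hempty]

theorem eq_top_of_rank_eq_one (P : Pref β) {x : β} (h : P.rank x = 1) : x = P.top := by
  by_contra hx
  have h1 := P.rank_lt_of_rel (P.top_spec x hx)
  rw [P.rank_top] at h1
  omega

theorem above_eq_of_rank_eq_two (P : Pref β) {x : β} (h : P.rank x = 2) :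
    {w | P.rel w x} = {P.top} := by
  have h1 : {w | P.rel w x}.ncard = 1 := by
    have : {w | P.rel w x}.ncard + 1 = 2 := h
    omega
  obtain ⟨w, hw⟩ := Set.ncard_eq_one.mp h1
  have hxtop : x ≠ P.top := by
    intro hx
    rw [hx, P.rank_top] at h
    omega
  have htopmem : P.top ∈ {w | P.rel w x} := P.top_spec x hxtop
  rw [hw, Set.mem_singleton_iff] at htopmem
  rw [hw, htopmem]

theorem top_unique (P : Pref β) {x : β} (h : ∀ y, y ≠ x → P.rel x y) : P.top = x := by
  by_contra hne
  exact P.asymm _ _ (P.top_spec x fun h' => hne h'.symm) (h P.top hne)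

end Pref

section Stmt16Aux

variable {m : ℕ} {A : Fin m → Type u} [∀ s, Fintype (A s)] [∀ s, Nonempty (A s)]

theorem marg_top (P : Pref (∀ s, A s)) (s : Fin m) : (P.marg s).top = P.top s := by
  apply Pref.top_unique
  intro u hu
  show P.rel (Function.update P.top s (P.top s)) (Function.update P.top s u)
  rw [Function.update_eq_self]
  apply P.top_spec
  intro h
  apply hu
  have := congrFun h s
  simpa using this

theorem rank_marg (P : Pref (∀ s, A s)) (s : Fin m) (u : A s) :
    (P.marg s).rank u =
      {v : A s | P.rel (Function.update P.top s v) (Function.update P.top s u)}.ncard + 1 :=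
  rfl

/-- With a top-separable preference, the second-ranked alternative differs from the top
in exactly one coordinate. -/
theorem second_similar (R : Pref (∀ t, A t)) (hR : TopSeparable R) {y : ∀ t, A t}
    (h2 : R.rank y = 2) : ∃ s' : Fin m, y = Function.update R.top s' (y s') := by
  have hytop : y ≠ R.top := by
    intro h
    rw [h, R.rank_top] at h2
    omega
  obtain ⟨s1, hs1⟩ : ∃ t, y t ≠ R.top t := by
    by_contra h
    push_neg at h
    exact hytop (funext h)
  refine ⟨s1, ?_⟩
  have hoff : ∀ t, t ≠ s1 → y t = R.top t := by
    intro s2 hs2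
    by_contra hy2
    have hzrel : R.rel (Function.update y s1 (R.top s1)) y := by
      apply hR s1
      · refine ⟨?_, fun t ht => ?_⟩
        · simpa using fun h => hs1 h.symm
        · simp [Function.update_of_ne ht]
      · simp
    have hrank := R.rank_lt_of_rel hzrel
    rw [h2] at hrank
    have h1 := R.one_le_rank (Function.update y s1 (R.top s1))
    have hz1 : R.rank (Function.update y s1 (R.top s1)) = 1 := by omega
    have htop := R.eq_top_of_rank_eq_one hz1
    apply hy2
    have := congrFun htop s2
    simpa [Function.update_of_ne hs2] using this
  funext t
  by_cases ht : t = s1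
  · subst ht
    simp
  · simp [Function.update_of_ne ht, hoff t ht]

theorem strongly_connected_of (D : Set (Pref (∀ s, A s))) (s : Fin m)
    {R R' : Pref (∀ t, A t)} (hRD : R ∈ D) (hR'D : R' ∈ D) {x y : A s} (hxy : x ≠ y)
    (hTx : R.top s = x)
    (hT' : R'.top = Function.update R.top s y)
    (h2 : R.rank (Function.update R.top s y) = 2)
    (h2' : R'.rank R.top = 2)
    (hzz : ∀ w : ∀ t, A t, w s ≠ x → w s ≠ y → R.rank w = R'.rank w) :
    StronglyConnected (margDomain D s) x y := by
  have hupd_inj : ∀ u v : A s, Function.update R.top s u = Function.update R.top s v → u = v := by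
    intro u v h
    have := congrFun h s
    simpa using this
  have hupdT : Function.update R.top s x = R.top := by
    rw [← hTx]
    exact Function.update_eq_self s R.top
  have hupd' : ∀ u : A s, Function.update R'.top s u = Function.update R.top s u := by
    intro u
    rw [hT', Function.update_idem]
  have hyT : Function.update R.top s y ≠ R.top := by
    intro h
    apply hxy
    have := congrFun h s
    simp [hTx] at this
    exact this.symm ▸ rfl
  refine ⟨R.marg s, ⟨R, hRD, rfl⟩, R'.marg s, ⟨R', hR'D, rfl⟩, ?_, ?_, ?_, ?_, ?_⟩
  · have h := marg_top R s
    rw [show x = (R.marg s).top from (hTx ▸ h).symm]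
    exact (R.marg s).rank_top
  · rw [rank_marg]
    have habove := R.above_eq_of_rank_eq_two h2
    have hset : {v : A s | R.rel (Function.update R.top s v) (Function.update R.top s y)}
        = {x} := by
      ext v
      simp only [Set.mem_setOf_eq, Set.mem_singleton_iff]
      constructor
      · intro hv
        have hmem : Function.update R.top s v ∈ {w | R.rel w (Function.update R.top s y)} := hv
        rw [habove, Set.mem_singleton_iff] at hmem
        exact hupd_inj v x (by rw [hmem, hupdT])
      · rintro rfl
        rw [hupdT]
        exact R.top_spec _ hyT
    rw [hset, Set.ncard_singleton]
  · have h := marg_top R' s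
    rw [hT'] at h
    simp at h
    rw [show y = (R'.marg s).top from h.symm]
    exact (R'.marg s).rank_top
  · rw [rank_marg]
    have habove := R'.above_eq_of_rank_eq_two h2'
    have hset : {v : A s | R'.rel (Function.update R'.top s v) (Function.update R'.top s x)}
        = {y} := by
      ext v
      simp only [Set.mem_setOf_eq, Set.mem_singleton_iff]
      rw [hupd', hupd', hupdT]
      constructor
      · intro hv
        have hmem : Function.update R.top s v ∈ {w | R'.rel w R.top} := hv
        rw [habove, Set.mem_singleton_iff, hT'] at hmem
        exact hupd_inj v y hmem
      · rintro rfl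
        rw [← hT']
        apply R'.top_spec
        rw [hT']
        exact fun h => hyT h.symm
    rw [hset, Set.ncard_singleton]
  · intro z hzx hzy
    rw [rank_marg, rank_marg]
    have hrz3 : 2 < R.rank (Function.update R.top s z) := by
      have hne1 : R.rank (Function.update R.top s z) ≠ 1 := by
        intro h
        exact hzx (hupd_inj z x (by rw [R.eq_top_of_rank_eq_one h, hupdT]))
      have hne2 : R.rank (Function.update R.top s z) ≠ 2 := by
        intro h
        exact hzy (hupd_inj z y (R.rank_inj (h.trans h2.symm)))
      have := R.one_le_rank (Function.update R.top s z)
      omega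
    have hrzeq : R.rank (Function.update R.top s z) = R'.rank (Function.update R.top s z) :=
      hzz _ (by simpa using hzx) (by simpa using hzy)
    have hseteq : {v : A s | R.rel (Function.update R.top s v) (Function.update R.top s z)}
        = {v : A s | R'.rel (Function.update R'.top s v) (Function.update R'.top s z)} := by
      ext v
      simp only [Set.mem_setOf_eq]
      rw [hupd', hupd']
      by_cases hvz : v = z
      · subst hvz
        simp [R.not_rel_self, R'.not_rel_self]
      · have hne1 : Function.update R.top s v ≠ Function.update R.top s z := fun h =>
          hvz (hupd_inj _ _ h)
        rw [R.rel_iff_rank_lt hne1, R'.rel_iff_rank_lt hne1, ← hrzeq]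
        by_cases hvx : v = x
        · subst hvx
          rw [hupdT, R.rank_top, h2']
          omega
        · by_cases hvy : v = y
          · rw [hvy, h2]
            have hr1 : R'.rank (Function.update R.top s y) = 1 := by
              rw [← hT']
              exact R'.rank_top
            rw [hr1]
            omega
          · rw [hzz (Function.update R.top s v) (by simpa using hvx) (by simpa using hvy)]
    rw [hseteq]

end Stmt16Aux

section Stmt16Step

variable {m : ℕ} {A : Fin m → Type u} [∀ s, Fintype (A s)] [∀ s, Nonempty (A s)]

/-- Along an edge of `G_{~/~⁺}` within a top-separable domain, the top either keeps its
`s`-component or moves to a strongly connected one. -/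
theorem step_lemma (D : Set (Pref (∀ s, A s))) (hts : ∀ P ∈ D, TopSeparable P)
    (s : Fin m) {R R' : Pref (∀ t, A t)} (hRD : R ∈ D) (hR'D : R' ∈ D)
    (hadj : AdjEdge R R') :
    R'.top s = R.top s ∨ scEdge (margDomain D s) (R.top s) (R'.top s) := by
  rcases hadj with ⟨xf, yf, hne, hr1, hr2, hr3, hr4⟩ | ⟨-, -, s', x', y', hxy', hzp, hothers⟩
  · by_cases hx1 : R.rank xf = 1
    · have hxfT : xf = R.top := R.eq_top_of_rank_eq_one hx1
      have hyf2 : R.rank yf = 2 := by rw [hr1, hx1]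
      have hytop : yf = R'.top := R'.eq_top_of_rank_eq_one (by rw [hr2, hx1])
      obtain ⟨s1, hy⟩ := second_similar R (hts R hRD) hyf2
      have hyne : yf s1 ≠ R.top s1 := by
        intro h
        apply hne
        rw [hxfT, hy, h, Function.update_eq_self]
      by_cases hs1 : s1 = s
      · subst hs1
        right
        have hRtop' : R'.top s1 = yf s1 := by rw [← hytop]
        constructor
        · rw [hRtop']
          exact fun h => hyne h.symm
        · rw [hRtop']
          refine strongly_connected_of D s1 hRD hR'D (fun h => hyne h.symm) rfl ?_ ?_ ?_ ?_
          · rw [← hy]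
            exact hytop.symm
          · rw [← hy]
            exact hyf2
          · rw [← hxfT, hr3, hx1]
          · intro w hwx hwy
            refine hr4 w ?_ ?_
            · intro hh
              exact hwx (by rw [hh, ← hxfT])
            · intro hh
              exact hwy (by rw [hh])
      · left
        rw [← hytop, hy]
        exact Function.update_of_ne (fun h => hs1 h.symm) _ _
    · left
      have hTx : R.top ≠ xf := fun h => hx1 (by rw [← h]; exact R.rank_top)
      have hTy : R.top ≠ yf := by
        intro h
        have h1 := R.rank_top
        rw [h, hr1] at h1
        have := R.one_le_rank xf
        omega
      have h1 : R'.rank R.top = 1 := by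
        rw [← hr4 R.top hTx hTy]
        exact R.rank_top
      rw [← R'.eq_top_of_rank_eq_one h1]
  · by_cases hTy' : R.top s' = y'
    · exfalso
      have h := (hzp R.top).1
      rw [show Function.update R.top s' y' = R.top by
        rw [← hTy']; exact Function.update_eq_self s' R.top, R.rank_top] at h
      have := R.one_le_rank (Function.update R.top s' x')
      omega
    · by_cases hTx' : R.top s' = x'
      · have hupdx : Function.update R.top s' x' = R.top := by
          rw [← hTx']
          exact Function.update_eq_self s' R.top
        have h1 : R'.rank (Function.update R.top s' y') = 1 := by
          have h := (hzp R.top).2.1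
          rwa [hupdx, R.rank_top] at h
        have htop' : Function.update R.top s' y' = R'.top := R'.eq_top_of_rank_eq_one h1
        by_cases hs' : s' = s
        · subst hs'
          right
          have hRtop' : R'.top s' = y' := by
            rw [← htop']
            simp
          constructor
          · rw [hRtop', hTx']
            exact hxy'
          · rw [hRtop', hTx']
            refine strongly_connected_of D s' hRD hR'D hxy' hTx' htop'.symm ?_ ?_ ?_
            · have h := (hzp R.top).1
              rwa [hupdx, R.rank_top] at h
            · have h := (hzp R.top).2.2
              rwa [hupdx, R.rank_top] at h
            · intro w hwx hwy
              exact hothers w hwx hwy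
        · left
          rw [← htop']
          exact Function.update_of_ne (fun h => hs' h.symm) _ _
      · left
        have h1 : R'.rank R.top = 1 := by
          rw [← hothers R.top hTx' hTy']
          exact R.rank_top
        rw [← R'.eq_top_of_rank_eq_one h1]

end Stmt16Step

section PathExtract

/-- Extract, from a vertex on a path, the terminal subpath. -/
theorem path_suffix {β : Type u} (edge : β → β → Prop) {c : β} :
    ∀ (L : List β) (a : β), a ≠ c → List.Chain' edge L → L.Nodup → a ∈ L →
      L.getLast? = some c →
      ∃ l', IsPath edge Set.univ a c l' ∧ ∀ z ∈ l', z ∈ L := by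
  intro L
  induction L with
  | nil => intro a _ _ _ h; simp at h
  | cons w L2 ih =>
    intro a hac hch hnd hmem hlast
    by_cases haw : a = w
    · subst haw
      have hL2 : L2 ≠ [] := by
        rintro rfl
        simp at hlast
        exact hac hlast
      refine ⟨a :: L2, ⟨?_, hnd, rfl, hlast, fun z _ => Set.mem_univ z, hch⟩, fun z hz => hz⟩
      have := List.length_pos_iff.mpr hL2
      simp only [List.length_cons]
      omega
    · have hmem2 : a ∈ L2 := by
        rcases List.mem_cons.mp hmem with h | h
        · exact absurd h haw
        · exact h
      have hL2 : L2 ≠ [] := by rintro rfl; simp at hmem2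
      obtain ⟨u, t, rfl⟩ := List.exists_cons_of_ne_nil hL2
      obtain ⟨l', h1, h2⟩ := ih a hac hch.tail hnd.of_cons hmem2
        (by rw [← hlast, List.getLast?_cons_cons])
      exact ⟨l', h1, fun z hz => List.mem_cons_of_mem _ (h2 z hz)⟩

/-- Extract a path from a walk (with possible stalls and repetitions). -/
theorem walk_to_path {β : Type u} (edge : β → β → Prop) {c : β} :
    ∀ (ts : List β) (a : β), a ≠ c → ts.head? = some a → ts.getLast? = some c →
      List.Chain' (fun u v => u = v ∨ edge u v) ts →
      ∃ l', IsPath edge Set.univ a c l' ∧ ∀ z ∈ l', z ∈ ts := by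
  intro ts
  induction ts with
  | nil => intro a _ h; simp at h
  | cons x rest ih =>
    intro a hac hhead hlast hch
    have hxa : x = a := by simpa using hhead
    subst hxa
    cases rest with
    | nil =>
      exfalso
      simp at hlast
      exact hac hlast
    | cons y rest2 =>
      unfold List.Chain' at hch
      rw [List.isChain_cons_cons] at hch
      have hlast2 : (y :: rest2).getLast? = some c := by
        rw [← hlast, List.getLast?_cons_cons]
      rcases hch.1 with heq | hedge
      · subst heq
        obtain ⟨l', h1, h2⟩ := ih x hac rfl hlast2 hch.2
        exact ⟨l', h1, fun z hz => List.mem_cons_of_mem _ (h2 z hz)⟩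
      · by_cases hyc : y = c
        · have hxy : x ≠ y := fun h => hac (h.trans hyc)
          refine ⟨[x, y], ⟨by simp, by simp [hxy], rfl, by simp [hyc],
            fun z _ => Set.mem_univ z, List.isChain_pair.mpr hedge⟩, ?_⟩
          intro z hz
          rcases List.mem_cons.mp hz with rfl | hz'
          · exact List.mem_cons_self
          · simp at hz'
            subst hz'
            exact List.mem_cons_of_mem _ (List.mem_cons_self)
        · obtain ⟨l'', h1, h2⟩ := ih y hyc rfl hlast2 hch.2
          by_cases hmem : x ∈ l''
          · obtain ⟨l', h3, h4⟩ := path_suffix edge l'' x hac h1.2.2.2.2.2 h1.2.1 hmem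
              h1.2.2.2.1
            exact ⟨l', h3, fun z hz => List.mem_cons_of_mem _ (h2 z (h4 z hz))⟩
          · refine ⟨x :: l'', ⟨?_, List.nodup_cons.mpr ⟨hmem, h1.2.1⟩, rfl, ?_,
              fun z _ => Set.mem_univ z, ?_⟩, ?_⟩
            · have := h1.1
              simp only [List.length_cons]
              omega
            · have hne : l'' ≠ [] := by
                intro h
                rw [h] at h1
                have := h1.1
                simp at this
              obtain ⟨u, t, rfl⟩ := List.exists_cons_of_ne_nil hne
              rw [List.getLast?_cons_cons]
              exact h1.2.2.2.1
            · unfold List.Chain'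
              rw [List.isChain_cons]
              refine ⟨?_, h1.2.2.2.2.2⟩
              intro h hh
              rw [h1.2.2.1] at hh
              simp only [Option.mem_def, Option.some.injEq] at hh
              rw [← hh]
              exact hedge
            · intro z hz
              rcases List.mem_cons.mp hz with rfl | hz'
              · exact List.mem_cons_self
              · exact List.mem_cons_of_mem _ (h2 z hz')

end PathExtract
/-- if `b^s` lies on every path in `G_≈^{A^s}` connecting `a^s` and `c^s`,
then every induced marginal preference with top `a^s` ranks `b^s` above `c^s`. -/
theorem stmt_16 {m : ℕ} (hm : 2 ≤ m) {A : Fin m → Type u}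
    [∀ s, Fintype (A s)] [∀ s, Nonempty (A s)]
    (hcard : ∀ s, 2 ≤ Fintype.card (A s))
    (D : Set (Pref (∀ s, A s)))
    (hrich : RichDomain D)
    (hts : ∀ P ∈ D, TopSeparable P)
    (s : Fin m) (a b c : A s) (hac : a ≠ c) (hbc : b ≠ c)
    (hb : ∀ l : List (A s),
      IsPath (scEdge (margDomain D s)) Set.univ a c l → b ∈ l) :
    ∀ Q ∈ margDomain D s, Pref.top Q = a → Q.rel b c := by
  obtain ⟨hmr, -, -, hext⟩ := hrich
  intro Q hQ hQtop
  obtain ⟨P, hPD, rfl⟩ := hQ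
  have hTs : P.top s = a := by
    rw [← marg_top P s]
    exact hQtop
  rcases (P.marg s).total b c hbc with hgoal | hrev
  · exact hgoal
  exfalso
  have hPCB : P.rel (Function.update P.top s c) (Function.update P.top s b) := hrev
  have hBC : Function.update P.top s b ≠ Function.update P.top s c := by
    intro h
    apply hbc
    have := congrFun h s
    simpa using this
  obtain ⟨P', hP'D, hP'top⟩ := hmr (Function.update P.top s c)
  have htopne : P.top ≠ P'.top := by
    rw [hP'top]
    intro h
    have := congrFun h s
    simp at this
    exact hac (hTs.symm.trans this)
  obtain ⟨l, hpath, hnr⟩ := (hext P hPD P' hP'D htopne).1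
    (Function.update P.top s b) (Function.update P.top s c)
  obtain ⟨hlen, hnd, hhead, hlast, hmemD, hch⟩ := hpath
  have h0 : 0 < l.length := by omega
  have hq : l.length - 1 < l.length := by omega
  have hgetP : l.get ⟨0, h0⟩ = P := by
    have h := hhead
    rw [List.head?_eq_getElem?, List.getElem?_eq_getElem h0] at h
    rw [List.get_eq_getElem]
    exact Option.some.inj h
  have hgetP' : l.get ⟨l.length - 1, hq⟩ = P' := by
    have h := hlast
    rw [List.getLast?_eq_getElem?, List.getElem?_eq_getElem hq] at h
    rw [List.get_eq_getElem]
    exact Option.some.inj h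
  have hP'CB : P'.rel (Function.update P.top s c) (Function.update P.top s b) := by
    rw [← hP'top]
    exact P'.top_spec _ fun h => hBC (h.trans hP'top)
  -- every preference along the path ranks the `c`-slice alternative over the `b`-one
  have hCB_all : ∀ R ∈ l, R.rel (Function.update P.top s c) (Function.update P.top s b) := by
    intro R hRl
    by_contra hnot
    have hBCrel : R.rel (Function.update P.top s b) (Function.update P.top s c) :=
      (R.total _ _ hBC).resolve_right hnot
    obtain ⟨p, hp⟩ := List.mem_iff_get.mp hRl
    have hp0 : p.val ≠ 0 := by
      intro h
      have hRP : R = P := by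
        rw [← hp, ← hgetP]
        congr 1
        exact Fin.ext h
      rw [hRP] at hBCrel
      exact P.asymm _ _ hPCB hBCrel
    have hpl : p.val ≠ l.length - 1 := by
      intro h
      have hRP : R = P' := by
        rw [← hp, ← hgetP']
        congr 1
        exact Fin.ext h
      rw [hRP] at hBCrel
      exact P'.asymm _ _ hP'CB hBCrel
    apply hnr
    refine ⟨⟨0, h0⟩, p, ⟨l.length - 1, hq⟩, ?_, ?_, Or.inr ⟨?_, ?_, ?_⟩⟩
    · refine Fin.lt_def.mpr ?_
      simp only [Fin.val_mk]
      omega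
    · refine Fin.lt_def.mpr ?_
      simp only [Fin.val_mk]
      have := p.isLt
      omega
    · rw [hgetP]
      exact hPCB
    · rw [hp]
      exact hBCrel
    · rw [hgetP']
      exact hP'CB
  -- no preference along the path has `b` as the `s`-component of its top
  have hnotb : ∀ R ∈ l, R.top s ≠ b := by
    intro R hRl hRb
    have hsim : SimilarAt (Function.update P.top s b) (Function.update P.top s c) s := by
      refine ⟨by simpa using hbc, fun t ht => ?_⟩
      simp [Function.update_of_ne ht]
    have hrel := hts R (hmemD R hRl) s _ _ hsim (by simpa using hRb.symm)
    exact R.asymm _ _ (hCB_all R hRl) hrel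
  -- the `s`-components of the tops along the path form a walk in `G_≈`
  have hstep : List.Chain' (fun u v => u = v ∨ scEdge (margDomain D s) u v)
      (l.map fun R => R.top s) := by
    unfold List.Chain'
    rw [List.isChain_map, List.isChain_iff_getElem]
    intro i hi
    have hadj := List.isChain_iff_getElem.mp hch i hi
    have h1D : l.get ⟨i, by omega⟩ ∈ D := hmemD _ (List.get_mem l _)
    have h2D : l.get ⟨i + 1, by omega⟩ ∈ D := hmemD _ (List.get_mem l _)
    rcases step_lemma D hts s h1D h2D hadj with h | h
    · exact Or.inl h.symm
    · exact Or.inr h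
  have hheads : (l.map fun R => R.top s).head? = some a := by
    rw [List.head?_map, hhead]
    simp [hTs]
  have hlasts : (l.map fun R => R.top s).getLast? = some c := by
    rw [List.getLast?_map, hlast]
    simp [hP'top]
  obtain ⟨l', hpath', hsub⟩ := walk_to_path (scEdge (margDomain D s))
    (l.map fun R => R.top s) a hac hheads hlasts hstep
  obtain ⟨R, hRl, hRb⟩ := List.mem_map.mp (hsub b (hb l' hpath'))
  exact hnotb R hRl hRb
end
end

section
/- Fix a linear order ≺^s on each A^s and define thresholds x̲, x̄ ∈ A as follows: for each s ∈ M, if |A^s| = 2 then x̲^s = x̄^s is an arbitrary element of A^s, and if |A^s| ≥ 3 then x̲^s = min^{≺^s}(A^s) and x̄^s = max^{≺^s}(A^s). Then the separable domain D_S, consisting of all separable preferences on A, is a multidimensional hybrid domain on ≺ = ∏_s ≺^s with respect to x̲ and x̄: every separable preference is multidimensional hybrid on ≺ w.r.t. x̲, x̄, the induced marginal domain [D_S]^s equals the set of all linear orders on A^s for every s ∈ M, the graph G_≈^{A^s} is connected for every s, and for every s with x̲^s ≠ x̄^s the graph G_≈^{⟨x̲^s, x̄^s⟩} has no leaf. 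-/
noncomputable section

universe u

section Aux18

variable {β : Type u}

theorem Pref.ext' {P Q : Pref β} (h : P.rel = Q.rel) : P = Q := by
  cases P; cases Q; cases h; rfl

/-- A linear order from a `Pref`; its `lt` is definitionally `P.rel`. -/
noncomputable def linOfPref (P : Pref β) : LinearOrder β :=
  haveI : IsStrictTotalOrder β P.rel :=
    { irrefl := fun a h => P.asymm a a h h
      trans := P.trans
      trichotomous := fun a b hab hba => by
        by_contra h
        · rcases P.total a b h with h' | h'
          exacts [hab h', hba h'] }
  @linearOrderOfSTO β P.rel this (Classical.decRel _)

/-- A `Pref` from a linear order. -/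
noncomputable def prefOfLin (lin : LinearOrder β) : Pref β where
  rel a b := lin.lt a b
  asymm a b h h' := by letI := lin; exact absurd h' (lt_asymm h)
  trans a b c h h' := by letI := lin; exact lt_trans h h'
  total a b hab := by letI := lin; exact lt_or_gt_of_ne hab

/-- Auxiliary: the lexicographic preference attached to a family of linear orders. -/
noncomputable def lexPrefAux {m : ℕ} {A : Fin m → Type u} [∀ s, LinearOrder (A s)] :
    Pref (∀ s, A s) where
  rel a b := (toLex a : Lex (∀ s : Fin m, A s)) < toLex b
  asymm a b h h' := absurd h' (lt_asymm h)
  trans a b c h h' := lt_trans h h'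
  total a b hab := by
    haveI : WellFoundedLT (Fin m) := inferInstance
    letI : LinearOrder (Lex (∀ s : Fin m, A s)) := inferInstance
    rcases lt_or_gt_of_ne (a := (toLex a : Lex (∀ s, A s))) (b := toLex b)
      (fun h => hab (congrArg ofLex h)) with h | h
    exacts [Or.inl h, Or.inr h]

/-- The lexicographic combination of marginal preferences. -/
noncomputable def lexPref {m : ℕ} {A : Fin m → Type u} (Q : ∀ s, Pref (A s)) :
    Pref (∀ s, A s) :=
  @lexPrefAux m A (fun s => linOfPref (Q s))

theorem lexPref_rel_iff {m : ℕ} {A : Fin m → Type u} (Q : ∀ s, Pref (A s))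
    (a b : ∀ s, A s) :
    (lexPref Q).rel a b ↔ ∃ i, (∀ j, j < i → a j = b j) ∧ (Q i).rel (a i) (b i) :=
  Iff.rfl

theorem lexPref_sep {m : ℕ} {A : Fin m → Type u} (Q : ∀ s, Pref (A s)) :
    Separable (lexPref Q) :=
  ⟨Q, fun s a b hsim h =>
    (lexPref_rel_iff Q a b).2 ⟨s, fun j hj => hsim.2 j (ne_of_lt hj), h⟩⟩

theorem marg_lexPref {m : ℕ} {A : Fin m → Type u} [∀ s, Fintype (A s)]
    [∀ s, Nonempty (A s)] (Q : ∀ s, Pref (A s)) (s : Fin m) :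
    Pref.marg (lexPref Q) s = Q s := by
  apply Pref.ext'
  funext x y
  apply propext
  show (lexPref Q).rel (Function.update (lexPref Q).top s x)
      (Function.update (lexPref Q).top s y) ↔ (Q s).rel x y
  rw [lexPref_rel_iff]
  constructor
  · rintro ⟨i, hi, hrel⟩
    by_cases his : i = s
    · subst his; simpa using hrel
    · rw [Function.update_of_ne his, Function.update_of_ne his] at hrel
      exact absurd hrel (fun h => (Q i).asymm _ _ h h)
  · intro h
    exact ⟨s, fun j hj => by
      rw [Function.update_of_ne (ne_of_lt hj), Function.update_of_ne (ne_of_lt hj)],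
      by simpa using h⟩

theorem margDomain_sep_univ {m : ℕ} {A : Fin m → Type u} [∀ s, Fintype (A s)]
    [∀ s, Nonempty (A s)] (prec : ∀ s, LinearOrder (A s)) (s : Fin m) :
    margDomain {P : Pref (∀ s, A s) | Separable P} s = Set.univ := by
  ext Q0
  simp only [Set.mem_univ, iff_true]
  refine ⟨lexPref (Function.update (fun t => prefOfLin (prec t)) s Q0),
    lexPref_sep _, ?_⟩
  exact (marg_lexPref _ s).trans (by simp)

open Classical in
/-- Helper ranking function: `x` first, `y` second, everything else after. -/
noncomputable def gfun (x y z : β) : ℕ := if z = x then 0 else if z = y then 1 else 2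

theorem gfun_self (x y : β) : gfun x y x = 0 := by simp [gfun]

theorem gfun_eq_zero {x y z : β} : gfun x y z = 0 ↔ z = x := by
  unfold gfun; split_ifs with h1 h2 <;> simp [h1]

theorem gfun_snd {x y : β} (h : y ≠ x) : gfun x y y = 1 := by simp [gfun, h]

theorem gfun_eq_one {x y z : β} (h : y ≠ x) : gfun x y z = 1 ↔ z = y := by
  unfold gfun; split_ifs with h1 h2
  · simp [h1, h.symm]
  · simp [h2]
  · simp [h2]

theorem gfun_lt_two {x y z : β} : gfun x y z < 2 ↔ z = x ∨ z = y := by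
  unfold gfun; split_ifs with h1 h2
  · simp [h1]
  · simp [h2]
  · simp [h1, h2]

theorem gfun_other {x y z : β} (h1 : z ≠ x) (h2 : z ≠ y) : gfun x y z = 2 := by
  simp [gfun, h1, h2]

/-- The preference with `x` on top, `y` second, the rest ordered by `lin`. -/
noncomputable def twoTop (lin : LinearOrder β) (x y : β) : Pref β where
  rel a b := gfun x y a < gfun x y b ∨ (gfun x y a = gfun x y b ∧ lin.lt a b)
  asymm a b h h' := by
    letI := lin
    rcases h with h | ⟨h1, h2⟩ <;> rcases h' with h' | ⟨h1', h2'⟩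
    · omega
    · omega
    · omega
    · exact absurd h2' (lt_asymm h2)
  trans a b c h h' := by
    letI := lin
    rcases h with h | ⟨h1, h2⟩ <;> rcases h' with h' | ⟨h1', h2'⟩
    · exact Or.inl (h.trans h')
    · exact Or.inl (h1' ▸ h)
    · exact Or.inl (h1 ▸ h')
    · exact Or.inr ⟨h1.trans h1', lt_trans h2 h2'⟩
  total a b hab := by
    letI := lin
    rcases Nat.lt_trichotomy (gfun x y a) (gfun x y b) with h | h | h
    · exact Or.inl (Or.inl h)
    · rcases lt_or_gt_of_ne hab with h' | h'
      · exact Or.inl (Or.inr ⟨h, h'⟩)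
      · exact Or.inr (Or.inr ⟨h.symm, h'⟩)
    · exact Or.inr (Or.inl h)

theorem twoTop_rank_fst (lin : LinearOrder β) {x y : β} :
    (twoTop lin x y).rank x = 1 := by
  have hset : {b | (twoTop lin x y).rel b x} = ∅ := by
    ext b
    simp only [Set.mem_setOf_eq, Set.mem_empty_iff_false, iff_false]
    rintro (h | ⟨h1, h2⟩)
    · rw [gfun_self] at h; omega
    · rw [gfun_self] at h1
      have hb : b = x := gfun_eq_zero.1 h1
      subst hb
      exact absurd h2 (by letI := lin; exact lt_irrefl b)
  rw [Pref.rank, hset, Set.ncard_empty]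

theorem twoTop_rank_snd (lin : LinearOrder β) {x y : β} (hxy : x ≠ y) :
    (twoTop lin x y).rank y = 2 := by
  have hset : {b | (twoTop lin x y).rel b y} = {x} := by
    ext b
    simp only [Set.mem_setOf_eq, Set.mem_singleton_iff]
    constructor
    · rintro (h | ⟨h1, h2⟩)
      · rw [gfun_snd (Ne.symm hxy)] at h
        have hb0 : gfun x y b = 0 := by omega
        exact gfun_eq_zero.1 hb0
      · rw [gfun_snd (Ne.symm hxy)] at h1
        have hb : b = y := (gfun_eq_one (Ne.symm hxy)).1 h1
        subst hb
        exact absurd h2 (by letI := lin; exact lt_irrefl b)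
    · rintro rfl
      exact Or.inl (by rw [gfun_self, gfun_snd (Ne.symm hxy)]; omega)
  rw [Pref.rank, hset, Set.ncard_singleton]

theorem twoTop_rank_other (lin : LinearOrder β) {x y z : β} (hzx : z ≠ x)
    (hzy : z ≠ y) : (twoTop lin x y).rank z = (twoTop lin y x).rank z := by
  have hset : {b | (twoTop lin x y).rel b z} = {b | (twoTop lin y x).rel b z} := by
    ext b
    show (gfun x y b < gfun x y z ∨ (gfun x y b = gfun x y z ∧ lin.lt b z)) ↔
      (gfun y x b < gfun y x z ∨ (gfun y x b = gfun y x z ∧ lin.lt b z))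
    rw [gfun_other hzx hzy, gfun_other hzy hzx]
    constructor
    · rintro (h | ⟨h1, h2⟩)
      · exact Or.inl (gfun_lt_two.2 (gfun_lt_two.1 h).symm)
      · have hbx : b ≠ x := fun hb => by
          have := gfun_lt_two.2 (Or.inl hb : b = x ∨ b = y); omega
        have hby : b ≠ y := fun hb => by
          have := gfun_lt_two.2 (Or.inr hb : b = x ∨ b = y); omega
        exact Or.inr ⟨gfun_other hby hbx, h2⟩
    · rintro (h | ⟨h1, h2⟩)
      · exact Or.inl (gfun_lt_two.2 (gfun_lt_two.1 h).symm)
      · have hby : b ≠ y := fun hb => by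
          have := gfun_lt_two.2 (Or.inl hb : b = y ∨ b = x); omega
        have hbx : b ≠ x := fun hb => by
          have := gfun_lt_two.2 (Or.inr hb : b = y ∨ b = x); omega
        exact Or.inr ⟨gfun_other hbx hby, h2⟩
  rw [Pref.rank, Pref.rank, hset]

theorem sc_univ [Fintype β] (lin : LinearOrder β) {x y : β} (hxy : x ≠ y) :
    StronglyConnected (Set.univ : Set (Pref β)) x y :=
  ⟨twoTop lin x y, trivial, twoTop lin y x, trivial,
    twoTop_rank_fst lin, twoTop_rank_snd lin hxy,
    twoTop_rank_fst lin, twoTop_rank_snd lin hxy.symm,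
    fun z hzx hzy => twoTop_rank_other lin hzx hzy⟩

end Aux18

/-- the separable domain is a multidimensional hybrid domain for the
indicated thresholds, with full induced marginal domains. -/
theorem stmt_18 {m : ℕ} (hm : 2 ≤ m) {A : Fin m → Type u}
    [∀ s, Fintype (A s)] [∀ s, Nonempty (A s)]
    (hcard : ∀ s, 2 ≤ Fintype.card (A s))
    (prec : ∀ s, LinearOrder (A s)) (xlo xhi : ∀ s, A s)
    (h2 : ∀ s, Fintype.card (A s) = 2 → xlo s = xhi s)
    (h3 : ∀ s, 3 ≤ Fintype.card (A s) →
      xlo s = @Finset.min' (A s) (prec s) Finset.univ Finset.univ_nonempty ∧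
      xhi s = @Finset.max' (A s) (prec s) Finset.univ Finset.univ_nonempty) :
    MDHybridDomain {P : Pref (∀ s, A s) | Separable P} prec xlo xhi ∧
    ∀ s, margDomain {P : Pref (∀ s, A s) | Separable P} s = Set.univ := by
  have hmarg : ∀ s, margDomain {P : Pref (∀ s, A s) | Separable P} s = Set.univ :=
    margDomain_sep_univ prec
  have hwI : ∀ s, 3 ≤ Fintype.card (A s) →
      wInterval (prec s) (xlo s) (xhi s) = Set.univ := by
    intro s hc
    obtain ⟨hlo, hhi⟩ := h3 s hc
    ext z
    simp only [Set.mem_univ, iff_true, wInterval, Set.mem_setOf_eq]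
    left
    rw [hlo, hhi]
    exact ⟨Finset.min'_le _ _ (Finset.mem_univ _), Finset.le_max' _ _ (Finset.mem_univ _)⟩
  refine ⟨⟨?_, ?_, ?_⟩, hmarg⟩
  · -- Thresholds
    intro s
    by_cases hc : Fintype.card (A s) = 2
    · exact Or.inl (h2 s hc)
    · have hc3 : 3 ≤ Fintype.card (A s) := by have := hcard s; omega
      obtain ⟨hlo, hhi⟩ := h3 s hc3
      refine Or.inr ⟨?_, ?_⟩
      · rw [hlo, hhi]
        exact ne_of_lt (Finset.min'_lt_max'_of_card _
          (by rw [Finset.card_univ]; omega))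
      · rw [hwI s hc3, Set.ncard_univ, Nat.card_eq_fintype_card]
        omega
  · -- every separable preference is MD hybrid
    rintro P hP
    obtain ⟨Q, hQ⟩ := hP
    intro s a b hsim
    constructor
    · -- clause (i)
      intro hta
      have key : ∀ y : A s, y ≠ Pref.top P s → (Q s).rel (Pref.top P s) y := by
        intro y hy
        by_contra hcon
        have hne : Function.update (Pref.top P) s y ≠ Pref.top P := by
          intro h
          exact hy (by simpa using congrFun h s)
        have hsim' : SimilarAt (Function.update (Pref.top P) s y) (Pref.top P) s :=
          ⟨by simpa using hy, fun t ht => Function.update_of_ne ht _ _⟩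
        have hyt : (Q s).rel y (Pref.top P s) :=
          ((Q s).total _ _ hy).resolve_right hcon
        have hrel := hQ s _ _ hsim' (by simpa using hyt)
        exact P.asymm _ _ (P.top_spec _ hne) hrel
      have hbs : b s ≠ Pref.top P s := fun h => hsim.1 (hta.trans h.symm)
      exact hQ s a b hsim (by rw [hta]; exact key (b s) hbs)
    · -- clause (ii): vacuous
      intro hmem hnot
      exfalso
      letI := prec s
      have h3d : Pref.top P s ≠ a s ∧ a s ≠ b s ∧ Pref.top P s ≠ b s := by
        rcases hmem with ⟨h1, h2⟩ | ⟨h1, h2⟩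
        · exact ⟨ne_of_lt h1, ne_of_lt h2, ne_of_lt (lt_trans h1 h2)⟩
        · exact ⟨(ne_of_lt h2).symm, (ne_of_lt h1).symm, (ne_of_lt (lt_trans h1 h2)).symm⟩
      have hcard3 : 3 ≤ Fintype.card (A s) := by
        have hins : ({Pref.top P s, a s, b s} : Finset (A s)).card = 3 := by
          rw [Finset.card_insert_of_notMem (by simp [h3d.1, h3d.2.2]),
            Finset.card_insert_of_notMem (by simp [h3d.2.1]),
            Finset.card_singleton]
        calc 3 = ({Pref.top P s, a s, b s} : Finset (A s)).card := hins.symm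
          _ ≤ Fintype.card (A s) := Finset.card_le_univ _
      obtain ⟨hlo, hhi⟩ := h3 s hcard3
      apply hnot
      left
      constructor
      · rw [hlo]
        rcases hmem with ⟨h1, _⟩ | ⟨h1, _⟩ <;>
          exact lt_of_le_of_lt (Finset.min'_le _ _ (Finset.mem_univ _)) h1
      · rw [hhi]
        rcases hmem with ⟨_, h2⟩ | ⟨_, h2⟩ <;>
          exact lt_of_lt_of_le h2 (Finset.le_max' _ _ (Finset.mem_univ _))
  · -- graph conditions
    intro s
    constructor
    · intro x _ y _ hxy
      refine ⟨[x, y], ?_, ?_, rfl, rfl, by simp, ?_⟩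
      · simp
      · simp [hxy]
      · exact List.isChain_pair.mpr ⟨hxy, by
          rw [hmarg s]; exact sc_univ (prec s) hxy⟩
    · intro hne v hleaf
      have hc2 : Fintype.card (A s) ≠ 2 := fun h => hne (h2 s h)
      have hc3 : 3 ≤ Fintype.card (A s) := by have := hcard s; omega
      have hB := hwI s hc3
      obtain ⟨hv, w, ⟨hwB, hw⟩, huniq⟩ := hleaf
      have hcard' : 1 < (Finset.univ.erase v : Finset (A s)).card := by
        rw [Finset.card_erase_of_mem (Finset.mem_univ v), Finset.card_univ]
        omega
      obtain ⟨a, ha, c, hc, hac⟩ := Finset.one_lt_card.mp hcard'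
      have hav : a ≠ v := Finset.ne_of_mem_erase ha
      have hcv : c ≠ v := Finset.ne_of_mem_erase hc
      have h1 : a = w := huniq a ⟨by rw [hB]; trivial,
        ⟨hav.symm, by rw [hmarg s]; exact sc_univ (prec s) hav.symm⟩⟩
      have h2' : c = w := huniq c ⟨by rw [hB]; trivial,
        ⟨hcv.symm, by rw [hmarg s]; exact sc_univ (prec s) hcv.symm⟩⟩
      exact hac (h1.trans h2'.symm)
end
end

section
/- Fix a linear order ≺^s on each A^s with ≺ = ∏_s ≺^s and thresholds x̲, x̄ ∈ A. (a) If |A^s| ≥ 3 for every s ∈ M and x̲^s = min^{≺^s}(A^s) and x̄^s = max^{≺^s}(A^s) for every s ∈ M, then a preference P is multidimensional hybrid on ≺ with respect to x̲, x̄ if and only if P is top-separable. (b) If x̲ = x̄, then a preference P is multidimensional hybrid on ≺ with respect to x̲, x̄ if and only if P is multidimensional single-peaked on ≺. -/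
noncomputable section

universe u

/-- (a) with extremal thresholds, multidimensional hybridness coincides
with top-separability; (b) with coincident thresholds, it coincides with
multidimensional single-peakedness. -/
theorem stmt_19 {m : ℕ} (hm : 2 ≤ m) {A : Fin m → Type u}
    [∀ s, Fintype (A s)] [∀ s, Nonempty (A s)]
    (hcard : ∀ s, 2 ≤ Fintype.card (A s))
    (prec : ∀ s, LinearOrder (A s)) (xlo xhi : ∀ s, A s) :
    ((∀ s, 3 ≤ Fintype.card (A s)) →
      (∀ s, xlo s = @Finset.min' (A s) (prec s) Finset.univ Finset.univ_nonempty ∧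
            xhi s = @Finset.max' (A s) (prec s) Finset.univ Finset.univ_nonempty) →
      ∀ P : Pref (∀ s, A s), MDHybrid prec xlo xhi P ↔ TopSeparable P) ∧
    (xlo = xhi →
      ∀ P : Pref (∀ s, A s), MDHybrid prec xlo xhi P ↔ MSP prec P) := by
  constructor
  · -- part (a)
    intro _ hext P
    constructor
    · intro hP s a b hsim ha
      exact (hP s a b hsim).1 ha
    · intro hTS s a b hsim
      refine ⟨fun ha => hTS s a b hsim ha, fun hmem hnot => ?_⟩
      exfalso
      apply hnot
      obtain ⟨hlo, hhi⟩ := hext s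
      -- from hmem, there exist z < a s and a s < w
      have hlow : (prec s).lt (xlo s) (a s) := by
        rcases hmem with ⟨h1, h2⟩ | ⟨h1, h2⟩
        · exact @lt_of_le_of_lt _ (prec s).toPreorder _ _ _
            (hlo ▸ Finset.min'_le _ _ (Finset.mem_univ _)) h1
        · exact @lt_of_le_of_lt _ (prec s).toPreorder _ _ _
            (hlo ▸ Finset.min'_le _ _ (Finset.mem_univ _)) h1
      have hhigh : (prec s).lt (a s) (xhi s) := by
        rcases hmem with ⟨h1, h2⟩ | ⟨h1, h2⟩
        · exact @lt_of_lt_of_le _ (prec s).toPreorder _ _ _ h2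
            (hhi ▸ Finset.le_max' _ _ (Finset.mem_univ _))
        · exact @lt_of_lt_of_le _ (prec s).toPreorder _ _ _ h2
            (hhi ▸ Finset.le_max' _ _ (Finset.mem_univ _))
      exact Or.inl ⟨hlow, hhigh⟩
  · -- part (b)
    intro heq P
    have hs_empty : ∀ s (z : A s), z ∉ sInterval (prec s) (xlo s) (xhi s) := by
      intro s z hz
      have : xlo s = xhi s := congrFun heq s
      rcases hz with ⟨h1, h2⟩ | ⟨h1, h2⟩
      · exact @lt_irrefl _ (prec s).toPreorder _ (@lt_trans _ (prec s).toPreorder _ _ _ h1 (this ▸ h2))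
      · exact @lt_irrefl _ (prec s).toPreorder _ (@lt_trans _ (prec s).toPreorder _ _ _ h1 (this.symm ▸ h2))
    constructor
    · intro hP s a b hsim hmem
      by_cases ha : a s = Pref.top P s
      · exact (hP s a b hsim).1 ha
      · apply (hP s a b hsim).2 _ (hs_empty s _)
        rcases hmem with ⟨h1, h2⟩ | ⟨h1, h2⟩
        · exact Or.inl ⟨@lt_of_le_of_ne _ (prec s).toPartialOrder _ _ h1 (fun h => ha h.symm),
            @lt_of_le_of_ne _ (prec s).toPartialOrder _ _ h2 hsim.1⟩
        · exact Or.inr ⟨@lt_of_le_of_ne _ (prec s).toPartialOrder _ _ h1 (fun h => hsim.1 h.symm),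
            @lt_of_le_of_ne _ (prec s).toPartialOrder _ _ h2 ha⟩
    · intro hMSP s a b hsim
      constructor
      · intro ha
        apply hMSP s a b hsim
        rcases (prec s).le_total (a s) (b s) with h | h
        · exact Or.inl ⟨ha ▸ (prec s).le_refl _, h⟩
        · exact Or.inr ⟨h, ha ▸ (prec s).le_refl _⟩
      · intro hmem _
        apply hMSP s a b hsim
        rcases hmem with ⟨h1, h2⟩ | ⟨h1, h2⟩
        · exact Or.inl ⟨@le_of_lt _ (prec s).toPreorder _ _ h1, @le_of_lt _ (prec s).toPreorder _ _ h2⟩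
        · exact Or.inr ⟨@le_of_lt _ (prec s).toPreorder _ _ h1, @le_of_lt _ (prec s).toPreorder _ _ h2⟩
end
end
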